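/- Let s'', s', r', r'' be tuples of positive reals with s''_α < s'_α ≤ r'_α < r''_α for all α. Then the canonical continuous ring homomorphism Π_{[s'',r'']} → Π_{[s',r']} (the unique continuous extension of the identity on Laurent polynomials) is a completely continuous ℚ_p-linear operator: it is the limit, in the operator-norm topology on bounded ℚ_p-linear maps Π_{[s'',r'']} → Π_{[s',r']}, of the finite-rank truncation operators Σ_{m∈ℤ^n} a_m T^m ↦ Σ_{|m_α| ≤ N for all α} a_m T^m as N → ∞. -/

import Mathlib

open scoped BigOperators

/-- The weight `p^{-(t₁m₁+⋯+tₙmₙ)/(p-1)}` of the monomial `T^m` for the Gauss norm. -/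
noncomputable def gaussWeight (p : ℕ) {n : ℕ} (t : Fin n → ℝ) (m : Fin n → ℤ) : ℝ :=
  (p : ℝ) ^ (-(∑ α, t α * (m α : ℝ)) / ((p : ℝ) - 1))

/-- The Gauss norm `‖Σ aₘ Tᵐ‖_t` on the Laurent polynomial ring
`ℚ_p[T₁^{±1},…,Tₙ^{±1}]`, realized as the monoid algebra of `ℤⁿ` over `ℚ_p`. -/
noncomputable def gaussNorm (p : ℕ) [Fact p.Prime] {n : ℕ} (t : Fin n → ℝ)
    (f : AddMonoidAlgebra ℚ_[p] (Fin n → ℤ)) : ℝ :=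
  ⨆ m : Fin n → ℤ, ‖f.coeff m‖ * gaussWeight p t m

/-- The corner tuple of the box `∏ [sα, rα]` indexed by `c : Fin n → Bool`. -/
def corner {n : ℕ} (s r : Fin n → ℝ) (c : Fin n → Bool) : Fin n → ℝ :=
  fun α => if c α then r α else s α

/-- The interval norm `‖f‖_{[s,r]}`: the maximum of the Gauss norms over the `2ⁿ` corners. -/
noncomputable def intervalGaussNorm (p : ℕ) [Fact p.Prime] {n : ℕ} (s r : Fin n → ℝ)
    (f : AddMonoidAlgebra ℚ_[p] (Fin n → ℤ)) : ℝ :=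
  ⨆ c : Fin n → Bool, gaussNorm p (corner s r c) f

/-- Truncation of a Laurent polynomial: keep only the monomials `Tᵐ` with `|m_α| ≤ N`. -/
noncomputable def laurentTruncate (p : ℕ) [Fact p.Prime] {n : ℕ} (N : ℕ)
    (f : AddMonoidAlgebra ℚ_[p] (Fin n → ℤ)) : AddMonoidAlgebra ℚ_[p] (Fin n → ℤ) :=
  AddMonoidAlgebra.ofCoeff (Finsupp.filter (fun m => ∀ α, |m α| ≤ (N : ℤ)) f.coeff)

section lemmas
variable (p : ℕ) [hp : Fact p.Prime] {n : ℕ}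

lemma p_pos : (0:ℝ) < (p:ℝ) := by exact_mod_cast hp.out.pos
lemma p_one_lt : (1:ℝ) < (p:ℝ) := by exact_mod_cast hp.out.one_lt

lemma gaussWeight_pos (t : Fin n → ℝ) (m : Fin n → ℤ) : 0 < gaussWeight p t m :=
  Real.rpow_pos_of_pos (p_pos p) _

lemma gaussWeight_mono {t u : Fin n → ℝ} {m : Fin n → ℤ}
    (h : ∑ α, u α * (m α : ℝ) ≤ ∑ α, t α * (m α : ℝ)) :
    gaussWeight p t m ≤ gaussWeight p u m := by
  apply Real.rpow_le_rpow_of_exponent_le (le_of_lt (p_one_lt p))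
  apply div_le_div_of_nonneg_right (neg_le_neg h)
  linarith [p_one_lt p]

lemma bddAbove_term (t : Fin n → ℝ) (f : AddMonoidAlgebra ℚ_[p] (Fin n → ℤ)) :
    BddAbove (Set.range fun m => ‖f.coeff m‖ * gaussWeight p t m) := by
  apply BddAbove.mono (t := ↑(insert (0:ℝ) (f.coeff.support.image fun m => ‖f.coeff m‖ * gaussWeight p t m)))
  · rintro x ⟨m, rfl⟩
    by_cases hm : m ∈ f.coeff.support
    · exact Finset.mem_coe.mpr (Finset.mem_insert_of_mem (Finset.mem_image_of_mem _ hm))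
    · simp only [Finsupp.notMem_support_iff] at hm
      simp [hm]
  · exact (insert (0:ℝ) (f.coeff.support.image fun m => ‖f.coeff m‖ * gaussWeight p t m)).finite_toSet.bddAbove

lemma term_le_gaussNorm (t : Fin n → ℝ) (f : AddMonoidAlgebra ℚ_[p] (Fin n → ℤ)) (m : Fin n → ℤ) :
    ‖f.coeff m‖ * gaussWeight p t m ≤ gaussNorm p t f :=
  le_ciSup (bddAbove_term p t f) m

lemma gaussNorm_nonneg (t : Fin n → ℝ) (f : AddMonoidAlgebra ℚ_[p] (Fin n → ℤ)) :
    0 ≤ gaussNorm p t f :=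
  Real.iSup_nonneg fun m => mul_nonneg (norm_nonneg _) (gaussWeight_pos p t m).le

lemma gaussNorm_le (t : Fin n → ℝ) (f : AddMonoidAlgebra ℚ_[p] (Fin n → ℤ)) {C : ℝ}
    (h : ∀ m, ‖f.coeff m‖ * gaussWeight p t m ≤ C) : gaussNorm p t f ≤ C :=
  ciSup_le h

lemma gaussNorm_le_interval (s r : Fin n → ℝ) (c : Fin n → Bool)
    (f : AddMonoidAlgebra ℚ_[p] (Fin n → ℤ)) :
    gaussNorm p (corner s r c) f ≤ intervalGaussNorm p s r f :=
  le_ciSup (Set.Finite.bddAbove (Set.finite_range fun c => gaussNorm p (corner s r c) f)) c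

lemma intervalGaussNorm_nonneg (s r : Fin n → ℝ) (f : AddMonoidAlgebra ℚ_[p] (Fin n → ℤ)) :
    0 ≤ intervalGaussNorm p s r f :=
  Real.iSup_nonneg fun c => gaussNorm_nonneg p _ f

lemma intervalGaussNorm_le (s r : Fin n → ℝ) (f : AddMonoidAlgebra ℚ_[p] (Fin n → ℤ)) {C : ℝ}
    (h : ∀ c, gaussNorm p (corner s r c) f ≤ C) : intervalGaussNorm p s r f ≤ C :=
  ciSup_le h

lemma eq_zero_of_intervalGaussNorm_eq_zero (s r : Fin n → ℝ)
    (f : AddMonoidAlgebra ℚ_[p] (Fin n → ℤ)) (h : intervalGaussNorm p s r f = 0) : f = 0 := by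
  ext m
  have h1 : ‖f.coeff m‖ * gaussWeight p (corner s r fun _ => false) m ≤ 0 := by
    calc ‖f.coeff m‖ * _ ≤ gaussNorm p (corner s r fun _ => false) f := term_le_gaussNorm p _ f m
    _ ≤ intervalGaussNorm p s r f := gaussNorm_le_interval p s r _ f
    _ = 0 := h
  have h2 := gaussWeight_pos p (corner s r fun _ => false) m
  have := norm_nonneg (f.coeff m)
  have : ‖f.coeff m‖ = 0 := by nlinarith
  simpa using this

end lemmas

section comparison
variable (p : ℕ) [hp : Fact p.Prime] {n : ℕ}

lemma corner_mem {s r : Fin n → ℝ} (h : ∀ α, s α ≤ r α) (c : Fin n → Bool) (α : Fin n) :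
    s α ≤ corner s r c α ∧ corner s r c α ≤ r α := by
  unfold corner; cases c α <;> simp [h α]

lemma intervalGaussNorm_mono {s'' s' r' r'' : Fin n → ℝ}
    (hs : ∀ α, s'' α ≤ s' α) (hsr : ∀ α, s' α ≤ r' α) (hr : ∀ α, r' α ≤ r'' α)
    (f : AddMonoidAlgebra ℚ_[p] (Fin n → ℤ)) :
    intervalGaussNorm p s' r' f ≤ intervalGaussNorm p s'' r'' f := by
  apply intervalGaussNorm_le
  intro c'
  apply gaussNorm_le
  intro m
  set c'' : Fin n → Bool := fun β => decide (m β < 0) with hc''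
  calc ‖f.coeff m‖ * gaussWeight p (corner s' r' c') m
      ≤ ‖f.coeff m‖ * gaussWeight p (corner s'' r'' c'') m := by
        apply mul_le_mul_of_nonneg_left _ (norm_nonneg _)
        apply gaussWeight_mono
        apply Finset.sum_le_sum
        intro α _
        have hm := corner_mem (fun β => le_trans (hs β) (le_trans (hsr β) (hr β))) c'' α
        have h1 := (corner_mem hsr c' α).1
        have h2 := (corner_mem hsr c' α).2
        by_cases hneg : m α < 0
        · have : corner s'' r'' c'' α = r'' α := by simp [corner, hc'', hneg]
          rw [this]
          have hM : (m α : ℝ) ≤ 0 := by exact_mod_cast hneg.le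
          exact mul_le_mul_of_nonpos_right (by linarith [hr α]) hM
        · have : corner s'' r'' c'' α = s'' α := by simp [corner, hc'', hneg]
          rw [this]
          have hM : (0:ℝ) ≤ (m α : ℝ) := by exact_mod_cast not_lt.mp hneg
          exact mul_le_mul_of_nonneg_right (by linarith [hs α]) hM
    _ ≤ gaussNorm p (corner s'' r'' c'') f := term_le_gaussNorm p _ f m
    _ ≤ intervalGaussNorm p s'' r'' f := gaussNorm_le_interval p _ _ _ f

lemma laurentTruncate_apply (N : ℕ) (f : AddMonoidAlgebra ℚ_[p] (Fin n → ℤ)) (m : Fin n → ℤ) :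
    (laurentTruncate p N f).coeff m = if (∀ α, |m α| ≤ (N:ℤ)) then f.coeff m else 0 := by
  classical
  rw [laurentTruncate, AddMonoidAlgebra.coeff_ofCoeff, Finsupp.filter_apply]

lemma intervalGaussNorm_truncate_le (s r : Fin n → ℝ) (N : ℕ)
    (f : AddMonoidAlgebra ℚ_[p] (Fin n → ℤ)) :
    intervalGaussNorm p s r (laurentTruncate p N f) ≤ intervalGaussNorm p s r f := by
  apply intervalGaussNorm_le
  intro c
  apply gaussNorm_le
  intro m
  calc ‖(laurentTruncate p N f).coeff m‖ * gaussWeight p (corner s r c) m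
      ≤ ‖f.coeff m‖ * gaussWeight p (corner s r c) m := by
        apply mul_le_mul_of_nonneg_right _ (gaussWeight_pos p _ m).le
        rw [laurentTruncate_apply]
        split_ifs <;> simp
    _ ≤ gaussNorm p (corner s r c) f := term_le_gaussNorm p _ f m
    _ ≤ intervalGaussNorm p s r f := gaussNorm_le_interval p _ _ _ f

lemma tail_bound {s'' s' r' r'' : Fin n → ℝ}
    (hs : ∀ α, s'' α ≤ s' α) (hsr : ∀ α, s' α ≤ r' α) (hr : ∀ α, r' α ≤ r'' α)
    {δ : ℝ} (hδ0 : 0 ≤ δ) (hδ : ∀ α, δ ≤ s' α - s'' α ∧ δ ≤ r'' α - r' α)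
    (N : ℕ) (f : AddMonoidAlgebra ℚ_[p] (Fin n → ℤ)) :
    intervalGaussNorm p s' r' (f - laurentTruncate p N f) ≤
      (p:ℝ) ^ (-(δ * ((N:ℝ)+1)) / ((p:ℝ)-1)) * intervalGaussNorm p s'' r'' f := by
  set ε : ℝ := (p:ℝ) ^ (-(δ * ((N:ℝ)+1)) / ((p:ℝ)-1)) with hε
  have hε0 : 0 ≤ ε := (Real.rpow_pos_of_pos (p_pos p) _).le
  apply intervalGaussNorm_le
  intro c'
  apply gaussNorm_le
  intro m
  have hcoef : (f - laurentTruncate p N f).coeff m = if (∀ α, |m α| ≤ (N:ℤ)) then 0 else f.coeff m := by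
    rw [AddMonoidAlgebra.coeff_sub, Finsupp.sub_apply, laurentTruncate_apply]
    split_ifs <;> simp
  by_cases hm : ∀ α, |m α| ≤ (N:ℤ)
  · rw [hcoef, if_pos hm]
    simpa using mul_nonneg hε0 (intervalGaussNorm_nonneg p s'' r'' f)
  · rw [hcoef, if_neg hm]
    push_neg at hm
    obtain ⟨β, hβ⟩ := hm
    have hβ' : (N:ℝ) + 1 ≤ |(m β : ℝ)| := by
      rw [← Int.cast_abs]
      exact_mod_cast hβ
    set c'' : Fin n → Bool := fun γ => decide (m γ < 0) with hc''
    have key : ∀ α, corner s'' r'' c'' α * (m α : ℝ) + δ * |(m α : ℝ)| ≤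
        corner s' r' c' α * (m α : ℝ) := by
      intro α
      have h1 := (corner_mem hsr c' α).1
      have h2 := (corner_mem hsr c' α).2
      by_cases hneg : m α < 0
      · have hcc : corner s'' r'' c'' α = r'' α := by simp [corner, hc'', hneg]
        have hM : (m α : ℝ) ≤ 0 := by exact_mod_cast hneg.le
        have habs : |(m α : ℝ)| = -(m α : ℝ) := abs_of_nonpos hM
        have : (r'' α - δ) * (m α : ℝ) ≤ corner s' r' c' α * (m α : ℝ) :=
          mul_le_mul_of_nonpos_right (by linarith [(hδ α).2]) hM
        rw [hcc, habs]; linarith [this]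
      · have hcc : corner s'' r'' c'' α = s'' α := by simp [corner, hc'', hneg]
        have hM : (0:ℝ) ≤ (m α : ℝ) := by exact_mod_cast not_lt.mp hneg
        have habs : |(m α : ℝ)| = (m α : ℝ) := abs_of_nonneg hM
        have : (s'' α + δ) * (m α : ℝ) ≤ corner s' r' c' α * (m α : ℝ) :=
          mul_le_mul_of_nonneg_right (by linarith [(hδ α).1]) hM
        rw [hcc, habs]; linarith [this]
    have hsum : (∑ α, corner s'' r'' c'' α * (m α : ℝ)) + δ * ((N:ℝ)+1) ≤
        ∑ α, corner s' r' c' α * (m α : ℝ) := by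
      have h1 : (∑ α, corner s'' r'' c'' α * (m α : ℝ)) + ∑ α, δ * |(m α : ℝ)| ≤
          ∑ α, corner s' r' c' α * (m α : ℝ) := by
        rw [← Finset.sum_add_distrib]
        exact Finset.sum_le_sum fun α _ => key α
      have h2 : δ * ((N:ℝ)+1) ≤ ∑ α, δ * |(m α : ℝ)| := by
        calc δ * ((N:ℝ)+1) ≤ δ * |(m β : ℝ)| := mul_le_mul_of_nonneg_left hβ' hδ0
          _ ≤ ∑ α, δ * |(m α : ℝ)| := Finset.single_le_sum (f := fun α => δ * |(m α : ℝ)|)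
              (fun α _ => mul_nonneg hδ0 (abs_nonneg _)) (Finset.mem_univ β)
      linarith
    have hW : gaussWeight p (corner s' r' c') m ≤ ε * gaussWeight p (corner s'' r'' c'') m := by
      rw [hε, gaussWeight, gaussWeight, ← Real.rpow_add (p_pos p), ← add_div]
      apply Real.rpow_le_rpow_of_exponent_le (p_one_lt p).le
      have hp1 : (0:ℝ) < (p:ℝ) - 1 := by linarith [p_one_lt p]
      apply div_le_div_of_nonneg_right _ hp1.le
      linarith [hsum]
    calc ‖f.coeff m‖ * gaussWeight p (corner s' r' c') m
        ≤ ‖f.coeff m‖ * (ε * gaussWeight p (corner s'' r'' c'') m) :=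
          mul_le_mul_of_nonneg_left hW (norm_nonneg _)
      _ = ε * (‖f.coeff m‖ * gaussWeight p (corner s'' r'' c'') m) := by ring
      _ ≤ ε * gaussNorm p (corner s'' r'' c'') f :=
          mul_le_mul_of_nonneg_left (term_le_gaussNorm p _ f m) hε0
      _ ≤ ε * intervalGaussNorm p s'' r'' f :=
          mul_le_mul_of_nonneg_left (gaussNorm_le_interval p _ _ _ f) hε0

end comparison

/-- A completion `Π_{[s,r]}` of the Laurent polynomial ring with respect to a norm `N`. -/
structure GaussCompletion (p : ℕ) [Fact p.Prime] (n : ℕ)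
    (N : AddMonoidAlgebra ℚ_[p] (Fin n → ℤ) → ℝ) where
  carrier : Type
  [normedRing : NormedCommRing carrier]
  [normedAlgebra : NormedAlgebra ℚ_[p] carrier]
  [complete : CompleteSpace carrier]
  emb : AddMonoidAlgebra ℚ_[p] (Fin n → ℤ) →ₐ[ℚ_[p]] carrier
  isometric : ∀ f, ‖emb f‖ = N f
  denseRange : DenseRange (fun f => emb f)

attribute [instance] GaussCompletion.normedRing GaussCompletion.normedAlgebra
  GaussCompletion.complete

section extension
variable {p : ℕ} [hp : Fact p.Prime] {n : ℕ}
  {N'' N' : AddMonoidAlgebra ℚ_[p] (Fin n → ℤ) → ℝ}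

lemma GaussCompletion.emb_injective (C : GaussCompletion p n N'')
    (hsep : ∀ f, N'' f = 0 → f = 0) : Function.Injective C.emb := by
  intro f g h
  have : C.emb (f - g) = 0 := by rw [map_sub, h, sub_self]
  have h0 : N'' (f - g) = 0 := by rw [← C.isometric]; simp [this]
  exact sub_eq_zero.mp (hsep _ h0)

end extension

section ext2
variable {p : ℕ} [hp : Fact p.Prime] {n : ℕ}
  {N'' N' : AddMonoidAlgebra ℚ_[p] (Fin n → ℤ) → ℝ}

lemma GaussCompletion.exists_extension (C'' : GaussCompletion p n N'') (C : GaussCompletion p n N')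
    (hsep : ∀ f, N'' f = 0 → f = 0)
    (ψ : AddMonoidAlgebra ℚ_[p] (Fin n → ℤ) →ₗ[ℚ_[p]] AddMonoidAlgebra ℚ_[p] (Fin n → ℤ))
    {c : ℝ} (hb : ∀ f, N' (ψ f) ≤ c * N'' f) :
    ∃ Φ : C''.carrier →L[ℚ_[p]] C.carrier,
      (∀ f, Φ (C''.emb f) = C.emb (ψ f)) ∧ ∀ x, ‖Φ x‖ ≤ c * ‖x‖ := by
  have hinj : Function.Injective C''.emb.toLinearMap := C''.emb_injective hsep
  set E : Submodule ℚ_[p] C''.carrier := LinearMap.range C''.emb.toLinearMap with hE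
  let eL : AddMonoidAlgebra ℚ_[p] (Fin n → ℤ) ≃ₗ[ℚ_[p]] E :=
    LinearEquiv.ofInjective C''.emb.toLinearMap hinj
  have heL : ∀ f, ((eL f : E) : C''.carrier) = C''.emb f := fun f => rfl
  let g₀ : E →ₗ[ℚ_[p]] C.carrier := C.emb.toLinearMap ∘ₗ (ψ ∘ₗ eL.symm.toLinearMap)
  have hg₀app : ∀ f, g₀ (eL f) = C.emb (ψ f) := by
    intro f
    simp only [g₀, LinearMap.comp_apply, LinearEquiv.coe_coe, LinearEquiv.symm_apply_apply]
    rfl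
  have hg₀ : ∀ x : E, ‖g₀ x‖ ≤ c * ‖x‖ := by
    intro x
    obtain ⟨f, rfl⟩ := eL.surjective x
    rw [hg₀app]
    have h1 : ‖(eL f : E)‖ = ‖C''.emb f‖ := rfl
    rw [h1, C''.isometric, C.isometric]
    exact hb f
  let g : E →L[ℚ_[p]] C.carrier := g₀.mkContinuous c hg₀
  have hrange : Set.range (E.subtypeL) = (E : Set C''.carrier) := by
    ext x
    simp [Submodule.subtypeL_apply]
  have hdense : DenseRange (E.subtypeL) := by
    rw [DenseRange, hrange]
    have h2 : Set.range (fun f => C''.emb f) ⊆ (E : Set C''.carrier) := by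
      rintro _ ⟨f, rfl⟩; exact ⟨f, rfl⟩
    exact C''.denseRange.mono h2
  have hui : IsUniformInducing (E.subtypeL) := by
    exact isometry_subtype_coe.isUniformInducing
  refine ⟨g.extend E.subtypeL, ?_, ?_⟩
  · intro f
    have : C''.emb f = E.subtypeL (eL f) := rfl
    rw [this, ContinuousLinearMap.extend_eq _ hdense hui]
    show g₀ (eL f) = _
    exact hg₀app f
  · intro x
    refine isClosed_property (p := fun y => ‖(g.extend E.subtypeL) y‖ ≤ c * ‖y‖) C''.denseRange ?_ ?_ x
    · exact isClosed_le ((g.extend E.subtypeL).continuous.norm)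
        (continuous_const.mul continuous_norm)
    · intro f
      show ‖(g.extend E.subtypeL) (C''.emb f)‖ ≤ c * ‖C''.emb f‖
      have : C''.emb f = E.subtypeL (eL f) := rfl
      rw [this, ContinuousLinearMap.extend_eq _ hdense hui]
      show ‖g₀ (eL f)‖ ≤ _
      rw [hg₀app, C.isometric]
      have h1 : ‖E.subtypeL (eL f)‖ = ‖(eL f : E)‖ := rfl
      rw [h1]
      have h2 : ‖(eL f : E)‖ = N'' f := by
        have : ‖(eL f : E)‖ = ‖C''.emb f‖ := rfl
        rw [this, C''.isometric]
      rw [h2]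
      exact hb f

end ext2

noncomputable def truncLinearMap (p : ℕ) [Fact p.Prime] {n : ℕ} (N : ℕ) :
    AddMonoidAlgebra ℚ_[p] (Fin n → ℤ) →ₗ[ℚ_[p]] AddMonoidAlgebra ℚ_[p] (Fin n → ℤ) where
  toFun := laurentTruncate p N
  map_add' f g := by
    simp only [laurentTruncate, AddMonoidAlgebra.coeff_add, Finsupp.filter_add, AddMonoidAlgebra.ofCoeff_add]
  map_smul' c f := by
    simp only [laurentTruncate, AddMonoidAlgebra.coeff_smul, Finsupp.filter_smul, AddMonoidAlgebra.ofCoeff_smul, RingHom.id_apply]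

section span
variable {p : ℕ} [hp : Fact p.Prime] {n : ℕ}
  {N' : AddMonoidAlgebra ℚ_[p] (Fin n → ℤ) → ℝ}

lemma box_finite (n N : ℕ) : {m : Fin n → ℤ | ∀ α, |m α| ≤ (N:ℤ)}.Finite := by
  apply Set.Finite.subset (Fintype.piFinset fun _ : Fin n => Finset.Icc (-(N:ℤ)) (N:ℤ)).finite_toSet
  intro m hm
  simp only [Finset.coe_sort_coe, Finset.mem_coe, Fintype.mem_piFinset, Finset.mem_Icc]
  exact fun α => abs_le.mp (hm α)

lemma trunc_mem_span (C' : GaussCompletion p n N') (N : ℕ)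
    (f : AddMonoidAlgebra ℚ_[p] (Fin n → ℤ)) :
    C'.emb (laurentTruncate p N f) ∈ Submodule.span ℚ_[p]
      ((fun m : Fin n → ℤ => C'.emb (AddMonoidAlgebra.single m (1:ℚ_[p]))) ''
        {m | ∀ α, |m α| ≤ (N:ℤ)}) := by
  set g := laurentTruncate p N f with hg
  have hsupp : ∀ m ∈ g.coeff.support, ∀ α, |m α| ≤ (N:ℤ) := by
    intro m hm
    by_contra hc
    have : g.coeff m = 0 := by rw [hg, laurentTruncate_apply, if_neg hc]
    exact (Finsupp.mem_support_iff.mp hm) this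
  have hrep : g = ∑ m ∈ g.coeff.support, AddMonoidAlgebra.single m (g.coeff m) :=
    (AddMonoidAlgebra.sum_coeff_single g).symm
  rw [show C'.emb g = C'.emb (∑ m ∈ g.coeff.support, AddMonoidAlgebra.single m (g.coeff m)) by rw [← hrep]]
  rw [map_sum]
  apply Submodule.sum_mem
  intro m hm
  have hsingle : (AddMonoidAlgebra.single m (g.coeff m) : AddMonoidAlgebra ℚ_[p] (Fin n → ℤ)) =
      (g.coeff m) • AddMonoidAlgebra.single m (1:ℚ_[p]) := by
    rw [AddMonoidAlgebra.smul_single, smul_eq_mul, mul_one]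
  rw [hsingle, map_smul]
  exact Submodule.smul_mem _ _ (Submodule.subset_span ⟨m, hsupp m hm, rfl⟩)

end span

/-- For `0 < s'' < s' ≤ r' < r''` componentwise, the canonical continuous ring homomorphism
`Π_{[s'',r'']} → Π_{[s',r']}` (the unique continuous extension of the identity on Laurent
polynomials) is completely continuous: it is the operator-norm limit of the finite-rank
truncation operators `Σ aₘTᵐ ↦ Σ_{|m_α|≤N} aₘTᵐ` as `N → ∞`. -/
theorem restriction_map_completely_continuous
    (p : ℕ) [Fact p.Prime] (n : ℕ) (s'' s' r' r'' : Fin n → ℝ)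
    (h0 : ∀ α, 0 < s'' α) (h1 : ∀ α, s'' α < s' α) (h2 : ∀ α, s' α ≤ r' α)
    (h3 : ∀ α, r' α < r'' α)
    (C'' : GaussCompletion p n (intervalGaussNorm p s'' r''))
    (C' : GaussCompletion p n (intervalGaussNorm p s' r')) :
    (∃! F : C''.carrier →+* C'.carrier, Continuous F ∧ ∀ f, F (C''.emb f) = C'.emb f) ∧
    (∀ F : C''.carrier →L[ℚ_[p]] C'.carrier, (∀ f, F (C''.emb f) = C'.emb f) →
      ∃ T : ℕ → (C''.carrier →L[ℚ_[p]] C'.carrier),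
        (∀ N : ℕ,
          FiniteDimensional ℚ_[p]
            ↥(LinearMap.range ((T N).toLinearMap)) ∧
          ∀ f, T N (C''.emb f) = C'.emb (laurentTruncate p N f)) ∧
        Filter.Tendsto T Filter.atTop (nhds F)) := by
  have hsep : ∀ f, intervalGaussNorm p s'' r'' f = 0 → f = 0 :=
    fun f h => eq_zero_of_intervalGaussNorm_eq_zero p s'' r'' f h
  have hs : ∀ α, s'' α ≤ s' α := fun α => (h1 α).le
  have hr : ∀ α, r' α ≤ r'' α := fun α => (h3 α).le
  constructor
  · -- Part 1
    obtain ⟨Φ, hΦ, -⟩ := C''.exists_extension C' hsep LinearMap.id (c := 1)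
      (fun f => by simpa using intervalGaussNorm_mono p hs h2 hr f)
    have hΦ' : ∀ f, Φ (C''.emb f) = C'.emb f := fun f => by simpa using hΦ f
    have hmul : ∀ x y : C''.carrier, Φ (x * y) = Φ x * Φ y := by
      refine DenseRange.induction_on₂ C''.denseRange ?_ ?_
      · exact isClosed_eq (Φ.continuous.comp (continuous_fst.mul continuous_snd))
          ((Φ.continuous.comp continuous_fst).mul (Φ.continuous.comp continuous_snd))
      · intro a b
        rw [show C''.emb a * C''.emb b = C''.emb (a * b) from (map_mul _ _ _).symm,
          hΦ', hΦ', hΦ', map_mul]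
    refine ⟨{ toFun := Φ, map_one' := ?_, map_mul' := hmul,
              map_zero' := map_zero Φ, map_add' := map_add Φ }, ⟨Φ.continuous, hΦ'⟩, ?_⟩
    · rw [show (1 : C''.carrier) = C''.emb 1 from (map_one C''.emb).symm, hΦ', map_one]
    · rintro G ⟨hGc, hG⟩
      apply RingHom.ext
      intro x
      exact isClosed_property C''.denseRange (isClosed_eq hGc Φ.continuous)
        (fun f => (hG f).trans (hΦ' f).symm) x
  · -- Part 2
    intro F hF
    have hbN : ∀ N f, intervalGaussNorm p s'' r'' (truncLinearMap p N f) ≤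
        1 * intervalGaussNorm p s'' r'' f :=
      fun N f => by rw [one_mul]; exact intervalGaussNorm_truncate_le p s'' r'' N f
    choose P hP hPb using fun N => C''.exists_extension C'' hsep (truncLinearMap p N) (hbN N)
    have hTemb : ∀ N f, (F.comp (P N)) (C''.emb f) = C'.emb (laurentTruncate p N f) := by
      intro N f
      show F (P N (C''.emb f)) = _
      rw [hP N f]
      exact hF _
    refine ⟨fun N => F.comp (P N), fun N => ⟨?_, hTemb N⟩, ?_⟩
    · -- finite dimensionality
      set W : Submodule ℚ_[p] C'.carrier := Submodule.span ℚ_[p]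
        ((fun m : Fin n → ℤ => C'.emb (AddMonoidAlgebra.single m (1:ℚ_[p]))) ''
          {m | ∀ α, |m α| ≤ (N:ℤ)}) with hW
      haveI : FiniteDimensional ℚ_[p] W :=
        FiniteDimensional.span_of_finite ℚ_[p] ((box_finite n N).image _)
      have hmem : ∀ x, (F.comp (P N)) x ∈ W := by
        intro x
        refine isClosed_property (p := fun y => (F.comp (P N)) y ∈ W) C''.denseRange ?_ ?_ x
        · exact IsClosed.preimage (F.comp (P N)).continuous W.closed_of_finiteDimensional
        · intro f
          show (F.comp (P N)) (C''.emb f) ∈ W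
          rw [hTemb N f]
          exact trunc_mem_span C' N f
      have hle : LinearMap.range (F.comp (P N)).toLinearMap ≤ W := by
        rintro _ ⟨x, rfl⟩
        exact hmem x
      exact Submodule.finiteDimensional_of_le hle
    · -- convergence
      rcases Nat.eq_zero_or_pos n with hn | hn
      · subst hn
        have heq : ∀ N, F.comp (P N) = F := by
          intro N
          apply ContinuousLinearMap.ext
          intro x
          refine isClosed_property C''.denseRange
            (isClosed_eq (F.comp (P N)).continuous F.continuous) ?_ x
          intro f
          rw [hTemb N f, hF]
          congr 1
          ext m
          rw [laurentTruncate_apply, if_pos (fun α => Fin.elim0 α)]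
        rw [show (fun N => F.comp (P N)) = fun _ => F from funext heq]
        exact tendsto_const_nhds
      · haveI : Nonempty (Fin n) := Fin.pos_iff_nonempty.mp hn
        set δ : ℝ := Finset.univ.inf' Finset.univ_nonempty
          (fun α => min (s' α - s'' α) (r'' α - r' α)) with hδdef
        have hδpos : 0 < δ := by
          rw [hδdef, Finset.lt_inf'_iff]
          intro α _
          exact lt_min (by linarith [h1 α]) (by linarith [h3 α])
        have hδle : ∀ α, δ ≤ s' α - s'' α ∧ δ ≤ r'' α - r' α := by
          intro α
          have h := Finset.inf'_le (fun α => min (s' α - s'' α) (r'' α - r' α))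
            (Finset.mem_univ α)
          exact ⟨le_trans h (min_le_left _ _), le_trans h (min_le_right _ _)⟩
        set ε : ℕ → ℝ := fun N => (p:ℝ) ^ (-(δ * ((N:ℝ)+1)) / ((p:ℝ)-1)) with hεdef
        have hε0 : ∀ N, 0 ≤ ε N := fun N => (Real.rpow_pos_of_pos (p_pos p) _).le
        have hop : ∀ N, ‖F.comp (P N) - F‖ ≤ ε N := by
          intro N
          apply ContinuousLinearMap.opNorm_le_bound _ (hε0 N)
          intro x
          refine isClosed_property (p := fun y => ‖(F.comp (P N) - F) y‖ ≤ ε N * ‖y‖)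
            C''.denseRange ?_ ?_ x
          · exact isClosed_le ((F.comp (P N) - F).continuous.norm)
              (continuous_const.mul continuous_norm)
          · intro f
            show ‖(F.comp (P N) - F) (C''.emb f)‖ ≤ ε N * ‖C''.emb f‖
            rw [ContinuousLinearMap.sub_apply, hTemb N f, hF]
            rw [show C'.emb (laurentTruncate p N f) - C'.emb f
                = -(C'.emb (f - laurentTruncate p N f)) by rw [map_sub]; ring]
            rw [norm_neg, C'.isometric, C''.isometric]
            exact tail_bound p hs h2 hr hδpos.le hδle N f
        rw [tendsto_iff_norm_sub_tendsto_zero]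
        apply squeeze_zero (fun N => norm_nonneg _) hop
        have hεeq : ε = fun N => ((p:ℝ) ^ (-δ / ((p:ℝ)-1))) ^ (N+1) := by
          funext N
          show (p:ℝ) ^ (-(δ * ((N:ℝ)+1)) / ((p:ℝ)-1)) = ((p:ℝ) ^ (-δ / ((p:ℝ)-1))) ^ (N+1)
          rw [← Real.rpow_natCast ((p:ℝ) ^ (-δ/((p:ℝ)-1))) (N+1), ← Real.rpow_mul (p_pos p).le]
          congr 1
          push_cast
          ring
        rw [hεeq]
        have hr0 : 0 ≤ (p:ℝ) ^ (-δ / ((p:ℝ)-1)) := (Real.rpow_pos_of_pos (p_pos p) _).le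
        have hr1 : (p:ℝ) ^ (-δ / ((p:ℝ)-1)) < 1 := by
          apply Real.rpow_lt_one_of_one_lt_of_neg (p_one_lt p)
          apply div_neg_of_neg_of_pos (by linarith) (by linarith [p_one_lt p])
        exact (tendsto_pow_atTop_nhds_zero_of_lt_one hr0 hr1).comp (Filter.tendsto_add_atTop_nat 1)
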